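/- If W is a trapezoidal palindrome of length at least 2, then the minimal period of W equals R_W + 1. -/

import Mathlib

open List

variable {α : Type*} [DecidableEq α]

/-- The set of factors (contiguous subwords) of `W`. -/
def factorFinset (W : List α) : Finset (List α) := (W.inits.flatMap List.tails).toFinset

/-- A palindrome is a word equal to its reversal. -/
def Pal (u : List α) : Prop := u.reverse = u

instance : DecidablePred (Pal : List α → Prop) :=
  fun u => inferInstanceAs (Decidable (u.reverse = u))

/-- The set of palindromic factors of `W` (including the empty word). -/
def palFactorFinset (W : List α) : Finset (List α) := (factorFinset W).filter Pal

/-- Subword complexity: the number of distinct factors of `W` of length `n`. -/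
def C (W : List α) (n : ℕ) : ℕ := ((factorFinset W).filter (fun u => u.length = n)).card

/-- Palindromic complexity: number of distinct palindromic factors of `W` of length `n`. -/
def P (W : List α) (n : ℕ) : ℕ := ((palFactorFinset W).filter (fun u => u.length = n)).card

/-- A word is rich if it has exactly `|W| + 1` distinct palindromic factors. -/
def Rich (W : List α) : Prop := (palFactorFinset W).card = W.length + 1

/-- Number of occurrences of `u` as a factor of `W`. -/
def occ (u W : List α) : ℕ := ((List.range (W.length + 1)).filter (fun i => u <+: W.drop i)).length

/-- `Z` is a complete return to `u` in `W`: a factor of `W` with exactly two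
occurrences of `u`, one as a prefix and one as a suffix. -/
def CompleteReturn (u Z W : List α) : Prop := Z <:+: W ∧ u <+: Z ∧ u <:+ Z ∧ occ u Z = 2

/-- `u` is a right special factor of `W`. -/
def RightSpecial (u W : List α) : Prop :=
  ∃ x y : α, x ≠ y ∧ (u ++ [x]) <:+: W ∧ (u ++ [y]) <:+: W

/-- `R_W`: the smallest `p` such that `W` has no right special factor of length `p`. -/
noncomputable def RW (W : List α) : ℕ := sInf {p : ℕ | ∀ u : List α, u.length = p → ¬ RightSpecial u W}

/-- `K_W`: the length of the shortest suffix of `W` occurring exactly once in `W`. -/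
noncomputable def KW (W : List α) : ℕ := sInf {k : ℕ | ∃ u : List α, u <:+ W ∧ u.length = k ∧ occ u W = 1}

/-- A word is trapezoidal if `|W| = R_W + K_W`. -/
def Trapezoidal (W : List α) : Prop := W.length = RW W + KW W

/-- The minimal period of `W`. -/
noncomputable def minPeriod (W : List α) : ℕ :=
  sInf {q : ℕ | 0 < q ∧ ∀ i : ℕ, i + q < W.length → W[i]? = W[i + q]?}

/-- A binary word is balanced if the number of occurrences of a letter in two
factors of equal length differ by at most 1. -/
def BalancedWord (W : List Bool) : Prop :=
  ∀ u v : List Bool, u <:+: W → v <:+: W → u.length = v.length →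
    u.count true ≤ v.count true + 1

namespace Stmt19Aux

variable {α : Type*} [DecidableEq α]

/-- occurrences as a finset -/
def occF (u W : List α) : Finset ℕ :=
  (Finset.range (W.length + 1)).filter (fun i => u <+: W.drop i)

lemma mem_occF {u W : List α} {i : ℕ} : i ∈ occF u W ↔ i ≤ W.length ∧ u <+: W.drop i := by
  simp [occF, Nat.lt_succ_iff]

lemma occ_eq_card (u W : List α) : occ u W = (occF u W).card := by
  have hnd : ((List.range (W.length + 1)).filter (fun i => u <+: W.drop i)).Nodup :=
    List.nodup_range.filter _
  rw [occ, ← List.toFinset_card_of_nodup hnd]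
  congr 1
  ext i
  simp [occF, List.mem_filter, Nat.lt_succ_iff]

lemma mem_factorFinset {u W : List α} : u ∈ factorFinset W ↔ u <:+: W := by
  simp only [factorFinset, List.mem_toFinset, List.mem_flatMap, List.mem_inits, List.mem_tails]
  constructor
  · rintro ⟨p, hp, hu⟩
    exact hu.isInfix.trans hp.isInfix
  · rintro ⟨s₁, s₂, rfl⟩
    exact ⟨s₁ ++ u, ⟨s₂, by simp⟩, ⟨s₁, rfl⟩⟩

lemma two_le_occ {u W : List α} {i j : ℕ} (hij : i ≠ j)
    (hi : i ≤ W.length) (hpi : u <+: W.drop i)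
    (hj : j ≤ W.length) (hpj : u <+: W.drop j) : 2 ≤ occ u W := by
  rw [occ_eq_card]
  apply Finset.one_lt_card_iff.mpr
  exact ⟨i, j, mem_occF.mpr ⟨hi, hpi⟩, mem_occF.mpr ⟨hj, hpj⟩, hij⟩

lemma one_le_occ {u W : List α} {i : ℕ} (hi : i ≤ W.length) (hpi : u <+: W.drop i) :
    1 ≤ occ u W := by
  rw [occ_eq_card]
  exact Finset.card_pos.mpr ⟨i, mem_occF.mpr ⟨hi, hpi⟩⟩

lemma infix_iff_occ {u W : List α} : u <:+: W ↔ ∃ i, i + u.length ≤ W.length ∧ u <+: W.drop i := by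
  constructor
  · rintro ⟨s₁, s₂, rfl⟩
    refine ⟨s₁.length, by simp, ?_⟩
    have : List.drop s₁.length (s₁ ++ u ++ s₂) = u ++ s₂ := by
      rw [List.append_assoc, List.drop_left]
    rw [this]
    exact ⟨s₂, rfl⟩
  · rintro ⟨i, hle, hp⟩
    exact hp.isInfix.trans (W.drop_suffix i).isInfix

omit [DecidableEq α] in
lemma getElem_of_prefix_drop {u W : List α} {i p : ℕ} (h : u <+: W.drop i)
    (hp : p < u.length) (hb : i + p < W.length) : u[p] = W[i + p] := by
  have ht : (W.drop i).take u.length = u := List.prefix_iff_eq_take.mp h |>.symm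
  have h2 : p < ((W.drop i).take u.length).length := by rw [ht]; exact hp
  calc u[p] = ((W.drop i).take u.length)[p]'h2 := by congr 1; exact ht.symm
    _ = (W.drop i)[p]'(by simp at h2 ⊢; omega) := List.getElem_take ..
    _ = W[i + p] := List.getElem_drop ..

omit [DecidableEq α] in
lemma prefix_drop_of_getElem {u W : List α} {i : ℕ} (hlen : i + u.length ≤ W.length)
    (h : ∀ p (hp : p < u.length), u[p] = W[i + p]'(by omega)) : u <+: W.drop i := by
  rw [List.prefix_iff_eq_take]
  apply List.ext_getElem
  · simp; omega
  · intro p h1 h2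
    rw [List.getElem_take, List.getElem_drop]
    exact h p (by simpa using h1)

omit [DecidableEq α] in
lemma pal_getElem {W : List α} (hpal : W.reverse = W) {i : ℕ} (hi : i < W.length) :
    W[i] = W[W.length - 1 - i]'(by omega) := by
  have h2 : i < W.reverse.length := by simpa
  have e1 : W.reverse[i]'h2 = W[i] := List.getElem_of_eq hpal h2
  rw [← e1, List.getElem_reverse]

omit [DecidableEq α] in
lemma suffix_eq_drop {u W : List α} (h : u <:+ W) : u = W.drop (W.length - u.length) := by
  obtain ⟨t, rfl⟩ := h
  simp

lemma occ_self {W : List α} (hW : W ≠ []) : occ W W = 1 := by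
  rw [occ_eq_card]
  have : occF W W = {0} := by
    ext i
    simp only [mem_occF, Finset.mem_singleton]
    constructor
    · rintro ⟨hi, hp⟩
      by_contra h0
      have := hp.length_le
      simp only [List.length_drop] at this
      have : W.length = 0 := by omega
      exact hW (List.length_eq_zero_iff.mp this)
    · rintro rfl
      exact ⟨Nat.zero_le _, by simp⟩
  rw [this, Finset.card_singleton]

lemma occ_nil (W : List α) : occ ([] : List α) W = W.length + 1 := by
  rw [occ_eq_card]
  have : occF ([] : List α) W = Finset.range (W.length + 1) := by
    ext i; simp [mem_occF, Finset.mem_range, Nat.lt_succ_iff]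
  rw [this, Finset.card_range]

lemma KW_mem {W : List α} (hW : W ≠ []) :
    ∃ u : List α, u <:+ W ∧ u.length = KW W ∧ occ u W = 1 :=
  Nat.sInf_mem (s := {k : ℕ | ∃ u : List α, u <:+ W ∧ u.length = k ∧ occ u W = 1})
    ⟨W.length, W, List.suffix_refl W, rfl, occ_self hW⟩

lemma KW_le_length {W : List α} (hW : W ≠ []) : KW W ≤ W.length :=
  Nat.sInf_le ⟨W, List.suffix_refl W, rfl, occ_self hW⟩

lemma KW_pos {W : List α} (hW : W ≠ []) : 1 ≤ KW W := by
  rcases Nat.eq_zero_or_pos (KW W) with h | h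
  · exfalso
    obtain ⟨u, hsuf, hlen, hocc⟩ := KW_mem hW
    rw [h] at hlen
    rw [List.length_eq_zero_iff.mp hlen, occ_nil] at hocc
    have : W.length = 0 := by omega
    exact hW (List.length_eq_zero_iff.mp this)
  · exact h

lemma occ_ne_one_of_lt_KW {W u : List α} {k : ℕ} (h : k < KW W) (hu : u <:+ W)
    (hl : u.length = k) : occ u W ≠ 1 := by
  intro h1
  have hle : KW W ≤ k :=
    Nat.sInf_le (s := {k : ℕ | ∃ u : List α, u <:+ W ∧ u.length = k ∧ occ u W = 1})
      ⟨u, hu, hl, h1⟩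
  omega

lemma occ_KW {W : List α} (hW : W ≠ []) : occ (W.drop (W.length - KW W)) W = 1 := by
  obtain ⟨u, hsuf, hlen, hocc⟩ := KW_mem hW
  rw [← hlen, ← suffix_eq_drop hsuf]
  exact hocc

lemma RSet_mono {W : List α} {p q : ℕ} (hpq : p ≤ q)
    (hp : ∀ u : List α, u.length = p → ¬ RightSpecial u W) :
    ∀ u : List α, u.length = q → ¬ RightSpecial u W := by
  induction q, hpq using Nat.le_induction with
  | base => exact hp
  | succ m hm ih =>
    rintro u hu ⟨x, y, hxy, hx, hy⟩
    rcases u with _ | ⟨c, u'⟩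
    · simp at hu
    · refine ih u' (by simpa using hu) ⟨x, y, hxy, ?_, ?_⟩
      · exact (List.suffix_cons c _).isInfix.trans (by simpa using hx)
      · exact (List.suffix_cons c _).isInfix.trans (by simpa using hy)

lemma RSet_top (W : List α) : ∀ u : List α, u.length = W.length → ¬ RightSpecial u W := by
  rintro u hu ⟨x, y, hxy, hx, hy⟩
  have := hx.length_le
  simp [hu] at this

lemma no_RS_of_ge {W : List α} {p : ℕ} (h : RW W ≤ p) :
    ∀ u : List α, u.length = p → ¬ RightSpecial u W := by
  have hmem : RW W ∈ {p : ℕ | ∀ u : List α, u.length = p → ¬ RightSpecial u W} :=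
    Nat.sInf_mem ⟨W.length, RSet_top W⟩
  exact RSet_mono h hmem

lemma exists_RS_of_lt {W : List α} {k : ℕ} (h : k < RW W) :
    ∃ u : List α, u.length = k ∧ RightSpecial u W := by
  by_contra hcon
  push_neg at hcon
  have hk : k ∈ {p : ℕ | ∀ u : List α, u.length = p → ¬ RightSpecial u W} := by
    intro u hu
    exact hcon u hu
  have hle : RW W ≤ k := Nat.sInf_le hk
  omega

omit [DecidableEq α] in
lemma minPeriod_spec {W : List α} (hW : 0 < W.length) :
    (0 < minPeriod W ∧ ∀ i : ℕ, i + minPeriod W < W.length → W[i]? = W[i + minPeriod W]?) ∧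
      minPeriod W ≤ W.length := by
  have hmem : minPeriod W ∈ {q : ℕ | 0 < q ∧ ∀ i : ℕ, i + q < W.length → W[i]? = W[i + q]?} :=
    Nat.sInf_mem ⟨W.length, hW, fun i hi => absurd hi (by omega)⟩
  exact ⟨hmem, Nat.sInf_le ⟨hW, fun i hi => absurd hi (by omega)⟩⟩

omit [DecidableEq α] in
lemma period_getElem {W : List α} {q i : ℕ}
    (hq : ∀ j : ℕ, j + q < W.length → W[j]? = W[j + q]?) (h : i + q < W.length) :
    W[i] = W[i + q] := by
  have := hq i h
  rwa [List.getElem?_eq_getElem (by omega), List.getElem?_eq_getElem h,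
    Option.some_inj] at this


lemma getElem_idx_congr {W : List α} {i j : ℕ} (h : i = j) (hi : i < W.length) :
    W[i]'hi = W[j]'(h ▸ hi) := by subst h; rfl

lemma counting_contra (W : List α) (R K : ℕ) (hn : W.length = R + K) (hK : 1 ≤ K) (hKR : K < R)
    (hpal : W.reverse = W)
    (hexRS : ∀ k < R, ∃ u : List α, u.length = k ∧ RightSpecial u W)
    (ht1 : occ (W.drop R) W = 1)
    (hsuf2 : ∀ k < K, 2 ≤ occ (W.drop (W.length - k)) W)
    (a x₀ : α) (hax : x₀ ≠ a)
    (hta : W.drop R = a :: W.drop (R+1))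
    (hxs : (x₀ :: W.drop (R+1)) <:+: W) : False := by
  set n := W.length with hnn
  set s : List α := W.drop (R+1) with hs
  set t : List α := W.drop R with ht
  have hs_len : s.length = K - 1 := by simp [hs]; omega
  have ht_len : t.length = K := by simp [ht]; omega
  have hs_inf : s <:+: W := (W.drop_suffix _).isInfix
  have ht_inf : t <:+: W := (W.drop_suffix _).isInfix
  -- the factor finsets
  set F : ℕ → Finset (List α) := fun k => (factorFinset W).filter (fun u => u.length = k) with hF
  have hmemF : ∀ {k : ℕ} {u : List α}, u ∈ F k ↔ u <:+: W ∧ u.length = k := by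
    intro k u
    simp [hF, Finset.mem_filter, mem_factorFinset]
  have hF0 : (F 0).card = 1 := by
    have : F 0 = {([] : List α)} := by
      ext u
      simp only [hmemF, Finset.mem_singleton, List.length_eq_zero_iff]
      constructor
      · rintro ⟨_, h⟩; exact h
      · rintro rfl; exact ⟨List.nil_infix, rfl⟩
    rw [this, Finset.card_singleton]
  have hcard_le : ∀ k, (F k).card ≤ n - k + 1 := by
    intro k
    have hsub : F k ⊆ (Finset.range (n - k + 1)).image (fun i => (W.drop i).take k) := by
      intro u hu
      obtain ⟨hinf, hlen⟩ := hmemF.mp hu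
      obtain ⟨i, hile, hp⟩ := infix_iff_occ.mp hinf
      refine Finset.mem_image.mpr ⟨i, Finset.mem_range.mpr (by omega), ?_⟩
      have := List.prefix_iff_eq_take.mp hp
      rw [← hlen, ← this]
    calc (F k).card ≤ _ := Finset.card_le_card hsub
      _ ≤ (Finset.range (n - k + 1)).card := Finset.card_image_le
      _ = n - k + 1 := Finset.card_range _
  -- concat extension of a prefix occurrence
  have hext_at : ∀ {u : List α} {i : ℕ}, u <+: W.drop i → i + u.length < n →
      ∃ x : α, (u ++ [x]) <:+: W := by
    intro u i hp hlt
    have hlen : u.length < (W.drop i).length := by simp; omega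
    refine ⟨(W.drop i)[u.length], ?_⟩
    have htake : (W.drop i).take (u.length + 1) = u ++ [(W.drop i)[u.length]] := by
      rw [List.take_succ, ← List.prefix_iff_eq_take.mp hp, List.getElem?_eq_getElem hlen]
      rfl
    have : (u ++ [(W.drop i)[u.length]]) <+: W.drop i := by
      rw [← htake]; exact List.take_prefix _ _
    exact this.isInfix.trans (W.drop_suffix i).isInfix
  -- right-extendability
  have hext : ∀ {k : ℕ} {u : List α}, u <:+: W → u.length = k → k < n →
      u ≠ W.drop (n - k) → ∃ x : α, (u ++ [x]) <:+: W := by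
    intro k u hinf hlen hlt hne
    obtain ⟨i, hile, hp⟩ := infix_iff_occ.mp hinf
    rcases Nat.lt_or_ge (i + u.length) n with h | h
    · exact hext_at hp h
    · exfalso
      apply hne
      have heq : u = W.drop i := hp.eq_of_length (by simp; omega)
      rw [heq, hlen] at *
      congr 1
      omega
  have hsuf_ext : ∀ k, k < K → ∃ x : α, (W.drop (n - k) ++ [x]) <:+: W := by
    intro k hk
    have h2 : 1 < (occF (W.drop (n-k)) W).card := by
      have := hsuf2 k hk
      rw [occ_eq_card] at this
      omega
    obtain ⟨i, j, hi, hj, hij⟩ := Finset.one_lt_card_iff.mp h2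
    obtain ⟨hi1, hi2⟩ := mem_occF.mp hi
    obtain ⟨hj1, hj2⟩ := mem_occF.mp hj
    have hdl : (W.drop (n-k)).length = k := by
      simp only [List.length_drop]; omega
    have hi3 : i ≤ n - k := by
      have h := hi2.length_le
      rw [hdl] at h
      simp only [List.length_drop] at h
      omega
    have hj3 : j ≤ n - k := by
      have h := hj2.length_le
      rw [hdl] at h
      simp only [List.length_drop] at h
      omega
    rcases Nat.lt_or_ge i (n - k) with h | h
    · exact hext_at hi2 (by omega)
    · have hieq : i = n - k := by omega
      have hjlt : j < n - k := by omega
      exact hext_at hj2 (by omega)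
  -- left-extendability
  have hlext : ∀ {k : ℕ} {u : List α}, u <:+: W → u.length = k → u ≠ W.take k →
      ∃ x : α, (x :: u) <:+: W := by
    intro k u hinf hlen hne
    obtain ⟨s₁, s₂, heq⟩ := hinf
    rcases List.eq_nil_or_concat s₁ with rfl | ⟨L, b, rfl⟩
    · exfalso
      apply hne
      have hp : u <+: W := ⟨s₂, by simpa using heq⟩
      rw [List.prefix_iff_eq_take.mp hp, hlen]
    · refine ⟨b, L, s₂, ?_⟩
      rw [← heq]
      simp [List.concat_eq_append]
  -- right fiber machinery
  set rf : ℕ → List α → ℕ := fun k u => ((F (k+1)).filter (fun v => v.dropLast = u)).card with hrf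
  have hsum_r : ∀ k, (F (k+1)).card = ∑ u ∈ F k, rf k u := by
    intro k
    apply Finset.card_eq_sum_card_fiberwise
    intro v hv
    obtain ⟨hinf, hlen⟩ := hmemF.mp hv
    exact hmemF.mpr ⟨(List.dropLast_prefix v).isInfix.trans hinf, by simp [hlen]⟩
  have hrf_ge1 : ∀ {k : ℕ} {u : List α}, u ∈ F k → (∃ x : α, (u ++ [x]) <:+: W) → 1 ≤ rf k u := by
    rintro k u hu ⟨x, hx⟩
    apply Finset.card_pos.mpr
    refine ⟨u ++ [x], Finset.mem_filter.mpr ⟨hmemF.mpr ⟨hx, ?_⟩, List.dropLast_concat⟩⟩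
    have := (hmemF.mp hu).2
    simp [this]
  have hrf_ge2 : ∀ {k : ℕ} {u : List α}, RightSpecial u W → u.length = k → 2 ≤ rf k u := by
    rintro k u ⟨x, y, hxy, hx, hy⟩ hlen
    apply Finset.one_lt_card_iff.mpr
    refine ⟨u ++ [x], u ++ [y], ?_, ?_, ?_⟩
    · exact Finset.mem_filter.mpr ⟨hmemF.mpr ⟨hx, by simp [hlen]⟩, List.dropLast_concat⟩
    · exact Finset.mem_filter.mpr ⟨hmemF.mpr ⟨hy, by simp [hlen]⟩, List.dropLast_concat⟩
    · intro hcon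
      exact hxy (by simpa using List.append_cancel_left hcon)
  -- RS witnesses are factors
  have hRS_mem : ∀ {k : ℕ} {u : List α}, RightSpecial u W → u.length = k → u ∈ F k := by
    rintro k u ⟨x, y, hxy, hx, hy⟩ hlen
    exact hmemF.mpr ⟨((List.prefix_append u [x]).isInfix).trans hx, hlen⟩
  -- sum lower bound helper
  have hsum_ge : ∀ (S : Finset (List α)) (f : List α → ℕ) (w : List α),
      (∀ u ∈ S, u ≠ w → 1 ≤ f u) → S.card - 1 ≤ ∑ u ∈ S, f u := by
    intro S f w hf
    calc S.card - 1 ≤ (S.erase w).card := Finset.pred_card_le_card_erase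
      _ = ∑ _u ∈ S.erase w, 1 := by simp
      _ ≤ ∑ u ∈ S.erase w, f u := by
          apply Finset.sum_le_sum
          intro u hu
          exact hf u (Finset.mem_of_mem_erase hu) (Finset.ne_of_mem_erase hu)
      _ ≤ ∑ u ∈ S, f u := Finset.sum_le_sum_of_subset (Finset.erase_subset _ _)
  -- L4 : growth below K
  have hL4 : ∀ k, k < K → (F k).card + 1 ≤ (F (k+1)).card := by
    intro k hk
    obtain ⟨u₁, hlen₁, hRS₁⟩ := hexRS k (by omega)
    have hu₁ : u₁ ∈ F k := hRS_mem hRS₁ hlen₁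
    rw [hsum_r k, ← Finset.add_sum_erase _ _ hu₁]
    have h2 : 2 ≤ rf k u₁ := hrf_ge2 hRS₁ hlen₁
    have hall : ∀ u ∈ (F k).erase u₁, 1 ≤ rf k u := by
      intro u hu
      have hu' := Finset.mem_of_mem_erase hu
      obtain ⟨hinf, hlen⟩ := hmemF.mp hu'
      rcases eq_or_ne u (W.drop (n - k)) with rfl | hne
      · exact hrf_ge1 hu' (hsuf_ext k hk)
      · exact hrf_ge1 hu' (hext hinf hlen (by omega) hne)
    have h3 : ((F k).erase u₁).card ≤ ∑ u ∈ (F k).erase u₁, rf k u := by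
      calc ((F k).erase u₁).card = ∑ _u ∈ (F k).erase u₁, 1 := by simp
        _ ≤ _ := Finset.sum_le_sum hall
    have h4 : ((F k).erase u₁).card = (F k).card - 1 := Finset.card_erase_of_mem hu₁
    have h5 : 1 ≤ (F k).card := Finset.card_pos.mpr ⟨u₁, hu₁⟩
    omega
  -- L2 : monotone between K and R
  have hL2 : ∀ k, K ≤ k → k < R → (F k).card ≤ (F (k+1)).card := by
    intro k hk1 hk2
    obtain ⟨u₁, hlen₁, hRS₁⟩ := hexRS k hk2
    have hu₁ : u₁ ∈ F k := hRS_mem hRS₁ hlen₁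
    rw [hsum_r k, ← Finset.add_sum_erase _ _ hu₁]
    have h2 : 2 ≤ rf k u₁ := hrf_ge2 hRS₁ hlen₁
    have h3 : ((F k).erase u₁).card - 1 ≤ ∑ u ∈ (F k).erase u₁, rf k u := by
      apply hsum_ge _ _ (W.drop (n - k))
      intro u hu hne
      have hu' := Finset.mem_of_mem_erase hu
      obtain ⟨hinf, hlen⟩ := hmemF.mp hu'
      exact hrf_ge1 hu' (hext hinf hlen (by omega) hne)
    have h4 : ((F k).erase u₁).card = (F k).card - 1 := Finset.card_erase_of_mem hu₁
    omega
  -- lower chain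
  have hCk : ∀ k, k ≤ K - 1 → k + 1 ≤ (F k).card := by
    intro k
    induction k with
    | zero => intro _; omega
    | succ m ih =>
      intro hm
      have h1 := ih (by omega)
      have h2 := hL4 m (by omega)
      omega
  have hCK1 : K ≤ (F (K-1)).card := by
    have := hCk (K-1) le_rfl
    omega
  have hKsucc : K - 1 + 1 = K := by omega
  have hCKstep : (F (K-1)).card + 1 ≤ (F K).card := by
    have := hL4 (K-1) (by omega)
    rwa [hKsucc] at this
  -- upper chain
  have hCR : ∀ m, K ≤ m → m ≤ R → (F K).card ≤ (F m).card := by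
    intro m hm1
    induction m, hm1 using Nat.le_induction with
    | base => intro _; exact le_rfl
    | succ m hm ih =>
      intro hmR
      exact (ih (by omega)).trans (hL2 m hm (by omega))
  have hCR_le : (F R).card ≤ K + 1 := by
    have := hcard_le R
    omega
  have hCKval : (F K).card = (F (K-1)).card + 1 ∧ (F (K-1)).card = K := by
    have h1 := hCR R (by omega) le_rfl
    omega
  obtain ⟨hCKeq, hCK1eq⟩ := hCKval
  -- left fiber at level K-1
  set lf : List α → ℕ := fun u => ((F K).filter (fun v => v.tail = u)).card with hlf
  have hsum_l : (F K).card = ∑ u ∈ F (K-1), lf u := by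
    apply Finset.card_eq_sum_card_fiberwise
    intro v hv
    obtain ⟨hinf, hlen⟩ := hmemF.mp hv
    exact hmemF.mpr ⟨(List.tail_suffix v).isInfix.trans hinf, by simp [hlen]⟩
  -- r = W.take (K-1) is left-extendable
  have hsc : ∃ c : α, (s ++ [c]) <:+: W := by
    obtain ⟨s₁, s₂, heq⟩ := hxs
    rcases s₂ with _ | ⟨c, s₂'⟩
    · exfalso
      have hsuf : (x₀ :: s) <:+ W := ⟨s₁, by simpa using heq⟩
      have hlen : (x₀ :: s).length = K := by simp [hs_len]; omega
      have := suffix_eq_drop hsuf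
      rw [hlen] at this
      have hteq : x₀ :: s = t := by rw [this, ht]; congr 1; omega
      rw [hta] at hteq
      exact hax (by injection hteq)
    · refine ⟨c, s₁ ++ [x₀], s₂', ?_⟩
      rw [← heq]
      simp
  have hr_lext : ∃ x : α, (x :: W.take (K-1)) <:+: W := by
    obtain ⟨c, hc⟩ := hsc
    refine ⟨c, ?_⟩
    have h1 : (s ++ [c]).reverse <:+: W.reverse := hc.reverse
    rw [hpal] at h1
    have h2 : (s ++ [c]).reverse = c :: s.reverse := by simp
    have h3 : s.reverse = W.take (K-1) := by
      rw [hs, List.reverse_drop, hpal]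
      congr 1
      omega
    rwa [h2, h3] at h1
  have hlf_ge1 : ∀ u ∈ F (K-1), 1 ≤ lf u := by
    intro u hu
    obtain ⟨hinf, hlen⟩ := hmemF.mp hu
    have hx : ∃ x : α, (x :: u) <:+: W := by
      rcases eq_or_ne u (W.take (K-1)) with rfl | hne
      · exact hr_lext
      · exact hlext hinf hlen hne
    obtain ⟨x, hx⟩ := hx
    apply Finset.card_pos.mpr
    exact ⟨x :: u, Finset.mem_filter.mpr ⟨hmemF.mpr ⟨hx, by simp [hlen]; omega⟩, rfl⟩⟩
  have hs_memF : s ∈ F (K-1) := hmemF.mpr ⟨hs_inf, hs_len⟩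
  have ht_memF : t ∈ F K := hmemF.mpr ⟨ht_inf, ht_len⟩
  have ht_tail : t.tail = s := by rw [ht, hs, List.tail_drop]
  have hx₀s_memF : (x₀ :: s) ∈ F K := hmemF.mpr ⟨hxs, by simp [hs_len]; omega⟩
  have htne : t ≠ x₀ :: s := by
    rw [hta]
    intro hcon
    injection hcon with h1 h2
    exact hax h1.symm
  have hlf_s2 : 2 ≤ lf s := by
    apply Finset.one_lt_card_iff.mpr
    exact ⟨t, x₀ :: s, Finset.mem_filter.mpr ⟨ht_memF, ht_tail⟩,
      Finset.mem_filter.mpr ⟨hx₀s_memF, rfl⟩, htne⟩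
  -- uniqueness of the left-special factor at level K-1
  have huniq : ∀ g ∈ F (K-1), 2 ≤ lf g → g = s := by
    intro g hg hg2
    by_contra hne
    have h1 : lf s + (lf g + (((F (K-1)).erase s).erase g).card) ≤ ∑ u ∈ F (K-1), lf u := by
      rw [← Finset.add_sum_erase _ _ hs_memF]
      have hg' : g ∈ (F (K-1)).erase s := Finset.mem_erase.mpr ⟨hne, hg⟩
      rw [← Finset.add_sum_erase _ _ hg']
      gcongr
      calc (((F (K-1)).erase s).erase g).card = ∑ _u ∈ ((F (K-1)).erase s).erase g, 1 := by simp
        _ ≤ _ := by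
            apply Finset.sum_le_sum
            intro u hu
            exact hlf_ge1 u (Finset.mem_of_mem_erase (Finset.mem_of_mem_erase hu))
    have h2 : (((F (K-1)).erase s).erase g).card = (F (K-1)).card - 2 := by
      rw [Finset.card_erase_of_mem (Finset.mem_erase.mpr ⟨hne, hg⟩), Finset.card_erase_of_mem hs_memF]
      omega
    rw [← hsum_l] at h1
    omega
  have hlf_s_le2 : lf s = 2 := by
    have h1 : lf s + ((F (K-1)).erase s).card ≤ ∑ u ∈ F (K-1), lf u := by
      rw [← Finset.add_sum_erase _ _ hs_memF]
      gcongr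
      calc ((F (K-1)).erase s).card = ∑ _u ∈ (F (K-1)).erase s, 1 := by simp
        _ ≤ _ := by
            apply Finset.sum_le_sum
            intro u hu
            exact hlf_ge1 u (Finset.mem_of_mem_erase hu)
    rw [← hsum_l, Finset.card_erase_of_mem hs_memF] at h1
    have := Finset.card_pos.mpr ⟨s, hs_memF⟩
    omega
  have hfiber_s : (F K).filter (fun v => v.tail = s) = {t, x₀ :: s} := by
    symm
    apply Finset.eq_of_subset_of_card_le
    · intro v hv
      rcases Finset.mem_insert.mp hv with rfl | hv'
      · exact Finset.mem_filter.mpr ⟨ht_memF, ht_tail⟩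
      · rw [Finset.mem_singleton.mp hv']
        exact Finset.mem_filter.mpr ⟨hx₀s_memF, rfl⟩
    · rw [Finset.card_pair htne]
      exact le_of_eq hlf_s_le2
  -- level K : a left special factor of length K
  obtain ⟨u₁, hlen₁, x, y, hxy, hx, hy⟩ := hexRS K hKR
  set v : List α := u₁.reverse with hv
  have hv_len : v.length = K := by simp [hv, hlen₁]
  have hxv : (x :: v) <:+: W := by
    have h1 : (u₁ ++ [x]).reverse <:+: W.reverse := hx.reverse
    rw [hpal] at h1
    simpa [hv] using h1
  have hyv : (y :: v) <:+: W := by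
    have h1 : (u₁ ++ [y]).reverse <:+: W.reverse := hy.reverse
    rw [hpal] at h1
    simpa [hv] using h1
  have hv_inf : v <:+: W := (List.suffix_cons x v).isInfix.trans hxv
  set g : List α := v.take (K-1) with hg
  have hg_len : g.length = K - 1 := by simp [hg, hv_len]
  have hg_memF : g ∈ F (K-1) :=
    hmemF.mpr ⟨(List.take_prefix _ _).isInfix.trans hv_inf, hg_len⟩
  have hxg : (x :: g) <:+: W := by
    have h1 : (x :: v).take (K - 1 + 1) = x :: g := List.take_succ_cons
    have h2 : (x :: v).take (K - 1 + 1) <:+: W := (List.take_prefix _ _).isInfix.trans hxv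
    rwa [h1] at h2
  have hyg : (y :: g) <:+: W := by
    have h1 : (y :: v).take (K - 1 + 1) = y :: g := List.take_succ_cons
    have h2 : (y :: v).take (K - 1 + 1) <:+: W := (List.take_prefix _ _).isInfix.trans hyv
    rwa [h1] at h2
  have hlf_g2 : 2 ≤ lf g := by
    apply Finset.one_lt_card_iff.mpr
    refine ⟨x :: g, y :: g, ?_, ?_, ?_⟩
    · exact Finset.mem_filter.mpr ⟨hmemF.mpr ⟨hxg, by simp [hg_len]; omega⟩, rfl⟩
    · exact Finset.mem_filter.mpr ⟨hmemF.mpr ⟨hyg, by simp [hg_len]; omega⟩, rfl⟩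
    · intro hcon
      exact hxy (by injection hcon)
  have hgs : g = s := huniq g hg_memF hlf_g2
  have hv_ne : v ≠ [] := by
    intro hcon
    rw [hcon] at hv_len
    simp at hv_len
    omega
  have hv_eq : v = s ++ [v.getLast hv_ne] := by
    conv_lhs => rw [← List.dropLast_append_getLast hv_ne]
    congr 1
    rw [List.dropLast_eq_take, hv_len, ← hg, hgs]
  set z : α := v.getLast hv_ne with hz
  -- one of x,y equals a
  have hxs_mem : (x :: s) ∈ (F K).filter (fun v => v.tail = s) := by
    refine Finset.mem_filter.mpr ⟨hmemF.mpr ⟨hgs ▸ hxg, by simp [hs_len]; omega⟩, rfl⟩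
  have hys_mem : (y :: s) ∈ (F K).filter (fun v => v.tail = s) := by
    refine Finset.mem_filter.mpr ⟨hmemF.mpr ⟨hgs ▸ hyg, by simp [hs_len]; omega⟩, rfl⟩
  rw [hfiber_s] at hxs_mem hys_mem
  have hone : x = a ∨ y = a := by
    rcases Finset.mem_insert.mp hxs_mem with h | h
    · left; rw [hta] at h; injection h
    · rcases Finset.mem_insert.mp hys_mem with h' | h'
      · right; rw [hta] at h'; injection h'
      · exfalso
        rw [Finset.mem_singleton] at h h'
        have hx' : x = x₀ := by injection h
        have hy' : y = x₀ := by injection h'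
        exact hxy (hx'.trans hy'.symm)
  have hav : (a :: v) <:+: W := by
    rcases hone with rfl | rfl
    · exact hxv
    · exact hyv
  -- final contradiction with occ t = 1
  have htz : (t ++ [z]) <:+: W := by
    have : a :: v = t ++ [z] := by
      rw [hv_eq, hta]
      simp
    rwa [this] at hav
  obtain ⟨i, hile, hpi⟩ := infix_iff_occ.mp htz
  have hlen_tz : (t ++ [z]).length = K + 1 := by simp [ht_len]
  have hiR : i < R := by rw [hlen_tz] at hile; omega
  have hti : t <+: W.drop i := (List.prefix_append t [z]).trans hpi
  have htR : t <+: W.drop R := List.prefix_refl t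
  have := two_le_occ (u := t) (W := W) (i := i) (j := R) (by omega) (by omega) hti (by omega) htR
  omega

end Stmt19Aux



theorem stmt19 {α : Type*} [DecidableEq α] (W : List α) (h2 : 2 ≤ W.length)
    (htrap : Trapezoidal W) (hpal : Pal W) : minPeriod W = RW W + 1 := by
  classical
  have hpal' : W.reverse = W := hpal
  have hW : W ≠ [] := by intro h; rw [h] at h2; simp at h2
  have htr : W.length = RW W + KW W := htrap
  set R := RW W with hR
  set K := KW W with hK
  have hK1 : 1 ≤ K := Stmt19Aux.KW_pos hW
  have hKn : K ≤ W.length := Stmt19Aux.KW_le_length hW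
  have hRlt : R < W.length := by omega
  have ht1 : occ (W.drop R) W = 1 := by
    have h := Stmt19Aux.occ_KW hW
    have e : W.length - KW W = R := by omega
    rwa [e] at h
  have ht_len : (W.drop R).length = K := by simp; omega
  have hta : W.drop R = W[R] :: W.drop (R+1) := List.drop_eq_getElem_cons hRlt
  obtain ⟨⟨hp0, hpper⟩, hple⟩ := Stmt19Aux.minPeriod_spec (W := W) (by omega)
  -- Step 1 : R + 1 ≤ minPeriod W
  have hge : R + 1 ≤ minPeriod W := by
    by_contra hcon
    push_neg at hcon
    have hpR : minPeriod W ≤ R := by omega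
    have hocc : (W.drop R) <+: W.drop (R - minPeriod W) := by
      apply Stmt19Aux.prefix_drop_of_getElem
      · intro p hp'
        have hpK : p < K := by rwa [ht_len] at hp'
        have h1 : (W.drop R)[p]'hp' = W[R + p]'(by omega) := List.getElem_drop ..
        have h2 : W[(R - minPeriod W) + p]'(by omega)
            = W[(R - minPeriod W) + p + minPeriod W]'(by omega) :=
          Stmt19Aux.period_getElem hpper (by omega)
        have h3 : W[(R - minPeriod W) + p + minPeriod W]'(by omega) = W[R + p]'(by omega) :=
          Stmt19Aux.getElem_idx_congr (by omega) _
        rw [h1, h2, h3]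
      · rw [ht_len]; omega
    have h2occ := Stmt19Aux.two_le_occ (u := W.drop R) (i := R - minPeriod W) (j := R)
      (by omega) (by omega) hocc (by omega) (List.prefix_refl _)
    omega
  -- Step 2 : the suffix of length K-1 is a prefix of W
  have hs0 : W.drop (R+1) <+: W := by
    by_contra hns
    have hK2 : 2 ≤ K := by
      by_contra hcon
      have hKeq : K = 1 := by omega
      have hnil : W.drop (R+1) = [] := by
        apply List.length_eq_zero_iff.mp
        simp
        omega
      rw [hnil] at hns
      exact hns List.nil_prefix
    have hs_len : (W.drop (R+1)).length = K - 1 := by simp; omega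
    have hocc2 : 1 < (Stmt19Aux.occF (W.drop (R+1)) W).card := by
      have hne1 : occ (W.drop (R+1)) W ≠ 1 :=
        Stmt19Aux.occ_ne_one_of_lt_KW (by omega) (W.drop_suffix _) hs_len
      have h1 : 1 ≤ occ (W.drop (R+1)) W :=
        Stmt19Aux.one_le_occ (i := R+1) (by omega) (List.prefix_refl _)
      rw [Stmt19Aux.occ_eq_card] at hne1 h1
      omega
    obtain ⟨i1, i2, hm1, hm2, hne12⟩ := Finset.one_lt_card_iff.mp hocc2
    have hjex : ∃ j, j ∈ Stmt19Aux.occF (W.drop (R+1)) W ∧ j ≠ R + 1 := by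
      rcases eq_or_ne i1 (R+1) with rfl | h
      · exact ⟨i2, hm2, fun hc => hne12 (by rw [hc])⟩
      · exact ⟨i1, hm1, h⟩
    obtain ⟨j, hjm, hjne⟩ := hjex
    obtain ⟨hjn, hjp⟩ := Stmt19Aux.mem_occF.mp hjm
    have hjle : j ≤ R := by
      have hl := hjp.length_le
      rw [hs_len] at hl
      simp only [List.length_drop] at hl
      omega
    have hj1 : 1 ≤ j := by
      rcases Nat.eq_zero_or_pos j with rfl | h
      · rw [List.drop_zero] at hjp; exact absurd hjp hns
      · exact h
    have hjlt : j - 1 < W.length := by omega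
    have hdropj : W.drop (j-1) = W[j-1] :: W.drop j := by
      have h := List.drop_eq_getElem_cons (l := W) (i := j-1) hjlt
      rwa [show j - 1 + 1 = j by omega] at h
    have hx0a : W[j-1]'hjlt ≠ W[R] := by
      intro heq
      have hocc' : W.drop R <+: W.drop (j-1) := by
        rw [hta, hdropj, heq]
        exact List.cons_prefix_cons.mpr ⟨rfl, hjp⟩
      have h2occ := Stmt19Aux.two_le_occ (u := W.drop R) (i := j-1) (j := R)
        (by omega) (by omega) hocc' (by omega) (List.prefix_refl _)
      omega
    have match? : ∀ p, p < K - 1 → W[j + p]? = W[R + 1 + p]? := by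
      intro p hp
      have h1 : (W.drop (R+1))[p]'(by rw [hs_len]; omega) = W[j+p]'(by omega) :=
        Stmt19Aux.getElem_of_prefix_drop hjp (by rw [hs_len]; omega) (by omega)
      have h2 : (W.drop (R+1))[p]'(by rw [hs_len]; omega) = W[R+1+p]'(by omega) :=
        List.getElem_drop ..
      rw [List.getElem?_eq_getElem (by omega : j+p < W.length),
        List.getElem?_eq_getElem (by omega : R+1+p < W.length)]
      rw [← h1, ← h2]
    have pal? : ∀ i, i < W.length → W[i]? = W[W.length - 1 - i]? := by
      intro i hi
      rw [List.getElem?_eq_getElem hi, List.getElem?_eq_getElem (by omega)]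
      exact congrArg some (Stmt19Aux.pal_getElem hpal' hi)
    rcases lt_trichotomy j K with hjK | hjK | hjK
    · -- j < K : gluing periodic windows
      have hA : ∀ i, j ≤ i → i + (R + 1 - j) < W.length → W[i]? = W[i + (R + 1 - j)]? := by
        intro i hji hid
        have hp : i - j < K - 1 := by omega
        have h1 := match? (i - j) hp
        have e1 : j + (i - j) = i := by omega
        have e2 : R + 1 + (i - j) = i + (R + 1 - j) := by omega
        rw [e1, e2] at h1
        exact h1
      have hper : (R + 1 - j) ∈
          {q : ℕ | 0 < q ∧ ∀ i : ℕ, i + q < W.length → W[i]? = W[i + q]?} := by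
        refine ⟨by omega, ?_⟩
        intro i hid
        rcases le_or_gt j i with hji | hji
        · exact hA i hji hid
        · have h1 := pal? i (by omega)
          have h2 := pal? (i + (R + 1 - j)) (by omega)
          have h3 := hA (W.length - 1 - i - (R + 1 - j)) (by omega) (by omega)
          have hi' : W.length - 1 - i - (R + 1 - j) + (R + 1 - j) = W.length - 1 - i := by omega
          rw [hi'] at h3
          have e : W.length - 1 - (i + (R + 1 - j)) = W.length - 1 - i - (R + 1 - j) := by omega
          rw [e] at h2
          rw [h1, h2, h3]
      have hle : minPeriod W ≤ R + 1 - j := Nat.sInf_le hper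
      omega
    · -- j = K : direct palindromy contradiction
      have h1 := pal? (K-1) (by omega)
      have e : W.length - 1 - (K - 1) = R := by omega
      rw [e] at h1
      have h2 : W[K-1]'(by omega) = W[R] := by
        rw [List.getElem?_eq_getElem (by omega : K-1 < W.length),
          List.getElem?_eq_getElem hRlt] at h1
        exact Option.some_inj.mp h1
      apply hx0a
      have h3 : W[j-1]'hjlt = W[K-1]'(by omega) :=
        Stmt19Aux.getElem_idx_congr (by omega) _
      rw [h3, h2]
    · -- K < j : counting argument
      have hKR : K < R := by omega
      refine Stmt19Aux.counting_contra W R K htr hK1 hKR hpal' ?_ ht1 ?_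
        (W[R]) (W[j-1]'hjlt) hx0a hta ?_
      · intro k hk
        exact Stmt19Aux.exists_RS_of_lt (show k < RW W by omega)
      · intro k hk
        have hne1 : occ (W.drop (W.length - k)) W ≠ 1 :=
          Stmt19Aux.occ_ne_one_of_lt_KW (k := k) (by omega) (W.drop_suffix _) (by simp; omega)
        have h1 : 1 ≤ occ (W.drop (W.length - k)) W :=
          Stmt19Aux.one_le_occ (i := W.length - k) (by omega) (List.prefix_refl _)
        omega
      · have hpx : W[j-1]'hjlt :: W.drop (R+1) <+: W.drop (j-1) := by
          rw [hdropj]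
          exact List.cons_prefix_cons.mpr ⟨rfl, hjp⟩
        exact hpx.isInfix.trans (W.drop_suffix _).isInfix
  -- Step 3 : R + 1 is a period of W
  have hperR : minPeriod W ≤ R + 1 := by
    apply Nat.sInf_le
    refine ⟨by omega, ?_⟩
    intro i hi
    have hs_len : (W.drop (R+1)).length = K - 1 := by simp; omega
    have hp : i < K - 1 := by omega
    have h1 : (W.drop (R+1))[i]'(by rw [hs_len]; exact hp) = W[0 + i]'(by omega) :=
      Stmt19Aux.getElem_of_prefix_drop (by rwa [List.drop_zero]) (by rw [hs_len]; exact hp)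
        (by omega)
    have h2 : (W.drop (R+1))[i]'(by rw [hs_len]; exact hp) = W[R+1+i]'(by omega) :=
      List.getElem_drop ..
    rw [List.getElem?_eq_getElem (by omega : i < W.length),
      List.getElem?_eq_getElem (by omega : i + (R+1) < W.length)]
    have ha : W[0 + i]'(by omega) = W[i]'(by omega) :=
      Stmt19Aux.getElem_idx_congr (by omega) _
    have hb : W[R+1+i]'(by omega) = W[i+(R+1)]'(by omega) :=
      Stmt19Aux.getElem_idx_congr (by omega) _
    exact congrArg some ((ha.symm.trans (h1.symm.trans h2)).trans hb)
  omega
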